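/- For every norm ‖·‖ on ℝ^d, the chromatic number χ((ℝ^d, ‖·‖), 1) of the unit distance graph on (ℝ^d, ‖·‖) is finite. -/

import Mathlib

/-- The chromatic number of the distance-`a` graph on `ℝ^d` equipped with the
(semi)norm `N`: the smallest cardinality of a color set `C` admitting a coloring
`φ : ℝ^d → C` that forbids the distance `a`. -/
noncomputable def distChromNum (d : ℕ) (N : Seminorm ℝ (Fin d → ℝ)) (a : ℝ) : Cardinal :=
  sInf {c : Cardinal | ∃ (C : Type) (φ : (Fin d → ℝ) → C),
    Cardinal.mk C = c ∧ ∀ x y : Fin d → ℝ, N (x - y) = a → φ x ≠ φ y}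

/-- Floors within distance: `|⌊u⌋ - ⌊v⌋| ≤ |u - v| + 1`. -/
lemma abs_floor_sub_floor_le (u v : ℝ) : |((⌊u⌋ : ℝ) - ⌊v⌋)| ≤ |u - v| + 1 := by
  rw [abs_le]
  constructor
  · have h1 : (⌊v⌋ : ℝ) - ⌊u⌋ ≤ v - (u - 1) := by
      have := Int.floor_le v
      have := Int.lt_floor_add_one u
      linarith
    have h2 : v - u ≤ |u - v| := by rw [abs_sub_comm]; exact le_abs_self _
    linarith
  · have h1 : (⌊u⌋ : ℝ) - ⌊v⌋ ≤ u - (v - 1) := by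
      have := Int.floor_le u
      have := Int.lt_floor_add_one v
      linarith
    have h2 : u - v ≤ |u - v| := le_abs_self _
    linarith

/-- Lemma 4.1: for every norm `‖·‖` on `ℝ^d`, the chromatic number of the unit distance
graph on `(ℝ^d, ‖·‖)` is finite. -/
theorem distChromNum_lt_aleph0 (d : ℕ) (N : Seminorm ℝ (Fin d → ℝ))
    (hN : ∀ x : Fin d → ℝ, N x = 0 → x = 0) :
    distChromNum d N 1 < Cardinal.aleph0 := by
  rcases Nat.eq_zero_or_pos d with hd | hd
  · -- d = 0: all vectors are 0, so the condition is vacuous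
    have hmem : (1 : Cardinal) ∈ {c : Cardinal | ∃ (C : Type) (φ : (Fin d → ℝ) → C),
        Cardinal.mk C = c ∧ ∀ x y : Fin d → ℝ, N (x - y) = 1 → φ x ≠ φ y} := by
      refine ⟨PUnit, fun _ => PUnit.unit, Cardinal.mk_punit, fun x y h _ => ?_⟩
      have hxy : x - y = 0 := by
        subst hd; ext i; exact absurd i.isLt (Nat.not_lt_zero _)
      rw [hxy, map_zero] at h
      norm_num at h
    exact lt_of_le_of_lt (csInf_le' hmem) Cardinal.one_lt_aleph0
  -- Upper bound: N x ≤ C * ‖x‖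
  set C : ℝ := (∑ i : Fin d, N (Pi.single i 1)) + 1 with hC
  have hCpos : 0 < C := by
    have : (0:ℝ) ≤ ∑ i : Fin d, N (Pi.single i 1) :=
      Finset.sum_nonneg fun i _ => apply_nonneg N _
    linarith
  have hub : ∀ x : Fin d → ℝ, N x ≤ C * ‖x‖ := by
    intro x
    have hx : x = ∑ i : Fin d, (x i) • (Pi.single i (1:ℝ) : Fin d → ℝ) := by
      ext j
      rw [Finset.sum_apply]
      simp [Pi.single_apply, Finset.sum_ite_eq', mul_comm]
    calc N x ≤ ∑ i : Fin d, N ((x i) • (Pi.single i (1:ℝ) : Fin d → ℝ)) := by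
            conv_lhs => rw [hx]
            exact Finset.le_sum_of_subadditive N (map_zero N).le (map_add_le_add N) _ _
      _ = ∑ i : Fin d, |x i| * N (Pi.single i 1) := by
            simp [map_smul_eq_mul, Real.norm_eq_abs]
      _ ≤ ∑ i : Fin d, ‖x‖ * N (Pi.single i 1) := by
            refine Finset.sum_le_sum fun i _ => ?_
            have h1 : |x i| ≤ ‖x‖ := by
              have := norm_le_pi_norm x i
              simpa [Real.norm_eq_abs] using this
            exact mul_le_mul_of_nonneg_right h1 (apply_nonneg N _)
      _ = (∑ i : Fin d, N (Pi.single i 1)) * ‖x‖ := by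
            rw [← Finset.mul_sum, mul_comm]
      _ ≤ C * ‖x‖ := by
            have := norm_nonneg x
            nlinarith
  -- N is continuous (Lipschitz)
  have hcont : Continuous fun x : Fin d → ℝ => N x := by
    refine (LipschitzWith.of_dist_le_mul (K := ⟨C, hCpos.le⟩) fun x y => ?_).continuous
    have h1 : |N x - N y| ≤ N (x - y) := abs_sub_map_le_sub N x y
    have h2 : N (x - y) ≤ C * ‖x - y‖ := hub _
    calc dist (N x) (N y) = |N x - N y| := Real.dist_eq _ _
      _ ≤ C * ‖x - y‖ := h1.trans h2
      _ = ↑(⟨C, hCpos.le⟩ : NNReal) * dist x y := by rw [dist_eq_norm]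
  -- Lower bound via compactness of the sphere
  have hsph : IsCompact (Metric.sphere (0 : Fin d → ℝ) 1) := isCompact_sphere 0 1
  have hne : (Metric.sphere (0 : Fin d → ℝ) 1).Nonempty := by
    refine ⟨Pi.single ⟨0, hd⟩ 1, ?_⟩
    simp [mem_sphere_iff_norm, Pi.norm_single]
  obtain ⟨x₀, hx₀mem, hx₀min⟩ := hsph.exists_isMinOn hne (hcont.continuousOn)
  set c : ℝ := N x₀ with hc
  have hx₀norm : ‖x₀‖ = 1 := by simpa [mem_sphere_iff_norm] using hx₀mem
  have hcpos : 0 < c := by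
    rcases (apply_nonneg N x₀).lt_or_eq with h | h
    · exact h
    · exfalso
      have : x₀ = 0 := hN x₀ h.symm
      rw [this, norm_zero] at hx₀norm
      norm_num at hx₀norm
  have hlb : ∀ x : Fin d → ℝ, c * ‖x‖ ≤ N x := by
    intro x
    rcases eq_or_ne x 0 with rfl | hx
    · simp
    · have hxn : (0:ℝ) < ‖x‖ := norm_pos_iff.mpr hx
      have hmem : ‖x‖⁻¹ • x ∈ Metric.sphere (0 : Fin d → ℝ) 1 := by
        simp [mem_sphere_iff_norm, norm_smul, abs_of_pos (inv_pos.mpr hxn),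
          inv_mul_cancel₀ hxn.ne']
      have h1 : c ≤ N (‖x‖⁻¹ • x) := hx₀min hmem
      have h2 : N (‖x‖⁻¹ • x) = ‖x‖⁻¹ * N x := by
        rw [map_smul_eq_mul, Real.norm_eq_abs, abs_of_pos (inv_pos.mpr hxn)]
      rw [h2] at h1
      calc c * ‖x‖ ≤ (‖x‖⁻¹ * N x) * ‖x‖ := by
            exact mul_le_mul_of_nonneg_right h1 hxn.le
        _ = N x := by field_simp
  -- Parameters
  set ε : ℝ := (2 * C)⁻¹ with hε
  have hεpos : 0 < ε := by positivity
  set k : ℕ := ⌈(c * ε)⁻¹⌉₊ + 2 with hk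
  have hkbig : 1 < c * ((k : ℝ) - 1) * ε := by
    have h1 : (c * ε)⁻¹ ≤ (⌈(c * ε)⁻¹⌉₊ : ℝ) := Nat.le_ceil _
    have h2 : ((k : ℝ) - 1) = (⌈(c * ε)⁻¹⌉₊ : ℝ) + 1 := by
      rw [hk]; push_cast; ring
    have hcε : 0 < c * ε := by positivity
    have h3 : (c * ε)⁻¹ * (c * ε) = 1 := inv_mul_cancel₀ hcε.ne'
    rw [h2]
    nlinarith
  -- The coloring
  set φ : (Fin d → ℝ) → (Fin d → ZMod k) := fun x i => ((⌊x i / ε⌋ : ℤ) : ZMod k) with hφ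
  have hkpos : 0 < k := by omega
  have : NeZero k := ⟨hkpos.ne'⟩
  have hmem : Cardinal.mk (Fin d → ZMod k) ∈ {c : Cardinal | ∃ (C : Type)
      (φ : (Fin d → ℝ) → C), Cardinal.mk C = c ∧
      ∀ x y : Fin d → ℝ, N (x - y) = 1 → φ x ≠ φ y} := by
    refine ⟨Fin d → ZMod k, φ, rfl, fun x y hxy hfeq => ?_⟩
    by_cases hsame : ∀ i, ⌊x i / ε⌋ = ⌊y i / ε⌋
    · -- same cell: N (x - y) < 1
      have hdist : ∀ i, |x i - y i| ≤ ε := by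
        intro i
        have h1 := Int.floor_le (x i / ε)
        have h2 := Int.lt_floor_add_one (x i / ε)
        have h3 := Int.floor_le (y i / ε)
        have h4 := Int.lt_floor_add_one (y i / ε)
        rw [hsame i] at h1 h2
        have h5 : |x i / ε - y i / ε| ≤ 1 := by rw [abs_le]; constructor <;> linarith
        have h6 : x i / ε - y i / ε = (x i - y i) / ε := by ring
        rw [h6, abs_div, abs_of_pos hεpos, div_le_one hεpos] at h5
        linarith
      have hnorm : ‖x - y‖ ≤ ε := by
        refine (pi_norm_le_iff_of_nonneg hεpos.le).mpr fun i => ?_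
        simpa [Real.norm_eq_abs] using hdist i
      have h1 : N (x - y) ≤ C * ε := (hub _).trans (mul_le_mul_of_nonneg_left hnorm hCpos.le)
      have h2 : C * ε = 2⁻¹ := by
        rw [hε, mul_inv, ← mul_assoc, mul_comm C, mul_assoc,
          mul_inv_cancel₀ hCpos.ne', mul_one]
      rw [hxy, h2] at h1
      norm_num at h1
    · -- different cells but same color: N (x - y) > 1
      push_neg at hsame
      obtain ⟨i, hi⟩ := hsame
      have hcol : ((⌊x i / ε⌋ : ℤ) : ZMod k) = ((⌊y i / ε⌋ : ℤ) : ZMod k) :=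
        congrFun hfeq i
      have hdvd : (k : ℤ) ∣ ⌊x i / ε⌋ - ⌊y i / ε⌋ :=
        ((ZMod.intCast_eq_intCast_iff _ _ _).mp hcol).symm.dvd
      have hne0 : ⌊x i / ε⌋ - ⌊y i / ε⌋ ≠ 0 := sub_ne_zero.mpr hi
      have hkle : (k : ℤ) ≤ |⌊x i / ε⌋ - ⌊y i / ε⌋| :=
        Int.le_of_dvd (abs_pos.mpr hne0) ((dvd_abs _ _).mpr hdvd)
      have hfl := abs_floor_sub_floor_le (x i / ε) (y i / ε)
      have hkle' : (k : ℝ) ≤ |((⌊x i / ε⌋ : ℝ) - ⌊y i / ε⌋)| := by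
        exact_mod_cast hkle
      have h7 : (k : ℝ) - 1 ≤ |x i / ε - y i / ε| := by linarith
      have h8 : x i / ε - y i / ε = (x i - y i) / ε := by ring
      rw [h8, abs_div, abs_of_pos hεpos] at h7
      have h9 : ((k : ℝ) - 1) * ε ≤ |x i - y i| := by
        rw [le_div_iff₀ hεpos] at h7
        linarith
      have h10 : |x i - y i| ≤ ‖x - y‖ := by
        have := norm_le_pi_norm (x - y) i
        simpa [Real.norm_eq_abs] using this
      have h11 : c * ‖x - y‖ ≤ N (x - y) := hlb _
      have h12 : c * (((k : ℝ) - 1) * ε) ≤ c * ‖x - y‖ :=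
        mul_le_mul_of_nonneg_left (h9.trans h10) hcpos.le
      rw [hxy] at h11
      nlinarith
  exact lt_of_le_of_lt (csInf_le' hmem) (Cardinal.lt_aleph0_of_finite _)
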